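/- Let G be a topological group possessing a q-point and H a closed subgroup of G. Then there exist a metrizable space M and a continuous mapping f : G/H → M that is open, closed, and has countably compact fibers (i.e., f is an open quasi-perfect map). In particular, G/H is an M-space. -/

import Mathlib

open Filter Topology
open Pointwise Uniformity SetRel

/-- Type synonym for the coset space `G ⧸ H`, used to carry an auxiliary
uniform structure. -/
def CosetU {G : Type u} [Group G] (H : Subgroup G) : Type u := G ⧸ H

/-- The identity map from `G ⧸ H` to its type synonym. -/
def toU {G : Type u} [Group G] {H : Subgroup G} (a : G ⧸ H) : CosetU H := a

/-- if a topological group `G` has a q-point and `H` is a closed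
subgroup, then `G/H` admits a continuous open closed map with countably compact
fibers onto a metrizable space; in particular `G/H` is an M-space. -/
theorem stmt_12 {G : Type u} [Group G] [TopologicalSpace G] [IsTopologicalGroup G] [T2Space G]
    (hq : ∃ (x : G) (U : ℕ → Set G), (∀ n, IsOpen (U n) ∧ x ∈ U n) ∧
      ∀ u : ℕ → G, (∀ n, u n ∈ U n) → ∃ p : G, MapClusterPt p atTop u)
    (H : Subgroup G) (hH : IsClosed (H : Set G)) :
    ∃ (M : Type u) (_ : TopologicalSpace M) (_ : TopologicalSpace.MetrizableSpace M)
      (f : G ⧸ H → M), Continuous f ∧ IsOpenMap f ∧ IsClosedMap f ∧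
        ∀ y : M, ∀ u : ℕ → G ⧸ H, (∀ n, u n ∈ f ⁻¹' {y}) →
          ∃ p ∈ f ⁻¹' {y}, MapClusterPt p atTop u := by
  classical
  obtain ⟨x₀, U, hU, hqc⟩ := hq
  -- Step 0: translate the q-point neighborhoods to the identity.
  obtain ⟨A, hA1, hAclus⟩ :
      ∃ A : ℕ → Set G, (∀ n, IsOpen (A n) ∧ (1 : G) ∈ A n) ∧
        ∀ u : ℕ → G, (∀ n, u n ∈ A n) → ∃ p : G, MapClusterPt p atTop u := by
    refine ⟨fun n => (fun g : G => g * x₀) ⁻¹' U n,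
      fun n => ⟨(hU n).1.preimage (continuous_mul_right x₀), by
        simp [Set.mem_preimage, (hU n).2]⟩, ?_⟩
    intro u hu
    obtain ⟨p, hp⟩ := hqc (fun n => u n * x₀) hu
    refine ⟨p * x₀⁻¹, ?_⟩
    have h2 := MapClusterPt.continuousAt_comp
      (f := fun g : G => g * x₀⁻¹) (continuous_mul_right x₀⁻¹).continuousAt hp
    simpa [Function.comp_def, mul_assoc] using h2
  -- Step 1: a shrinking sequence of symmetric open neighborhoods of 1.
  have step : ∀ S : Set G, IsOpen S → (1 : G) ∈ S →
      ∃ T : Set G, (IsOpen T ∧ (1 : G) ∈ T ∧ T⁻¹ = T) ∧ T * T ⊆ S := by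
    intro S hSo hS1
    obtain ⟨T₀, hT₀o, hT₀1, hT₀⟩ := exists_open_nhds_one_mul_subset (hSo.mem_nhds hS1)
    refine ⟨T₀ ∩ T₀⁻¹, ⟨hT₀o.inter hT₀o.inv, ⟨hT₀1, by simp [Set.mem_inv, hT₀1]⟩, ?_⟩, ?_⟩
    · rw [Set.inter_inv, _root_.inv_inv, Set.inter_comm]
    · exact (Set.mul_subset_mul Set.inter_subset_left Set.inter_subset_left).trans hT₀
  choose F hF hFmul using step
  have hFsub : ∀ S hSo hS1, F S hSo hS1 ⊆ S := by
    intro S hSo hS1 a ha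
    have := hFmul S hSo hS1 (Set.mul_mem_mul ha (hF S hSo hS1).2.1)
    simpa using this
  obtain ⟨V, hVo, hV1, hVsymm, hVmul, hV0A⟩ :
      ∃ V : ℕ → Set G, (∀ n, IsOpen (V n)) ∧ (∀ n, (1 : G) ∈ V n) ∧
        (∀ n, (V n)⁻¹ = V n) ∧ (∀ n, V (n + 1) * V (n + 1) ⊆ V n ∩ A (n + 1)) ∧
        V 0 ⊆ A 0 := by
    let Vaux : ℕ → {S : Set G // IsOpen S ∧ (1 : G) ∈ S ∧ S⁻¹ = S} := fun n =>
      Nat.rec ⟨F (A 0) (hA1 0).1 (hA1 0).2, hF _ _ _⟩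
        (fun n prev => ⟨F (prev.1 ∩ A (n + 1)) (prev.2.1.inter (hA1 (n + 1)).1)
          ⟨prev.2.2.1, (hA1 (n + 1)).2⟩, hF _ _ _⟩) n
    refine ⟨fun n => (Vaux n).1, fun n => (Vaux n).2.1, fun n => (Vaux n).2.2.1,
      fun n => (Vaux n).2.2.2, fun n => hFmul _ _ _, hFsub _ _ _⟩
  -- derived properties of V
  have hVdec : ∀ n, V (n + 1) ⊆ V n := by
    intro n g hg
    have := hVmul n (Set.mul_mem_mul hg (hV1 (n + 1)))
    rw [mul_one] at this
    exact this.1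
  have hVA : ∀ n, V n ⊆ A n := by
    intro n
    cases n with
    | zero => exact hV0A
    | succ n =>
      intro g hg
      have := hVmul n (Set.mul_mem_mul hg (hV1 (n + 1)))
      rw [mul_one] at this
      exact this.2
  have hVmono : Antitone V := antitone_nat_of_succ_le hVdec
  have hVclos : ∀ n, closure (V (n + 1)) ⊆ V n := by
    intro n g hg
    have hUopen : IsOpen ((fun t : G => g⁻¹ * t) ⁻¹' V (n + 1)) :=
      (hVo (n + 1)).preimage (continuous_mul_left g⁻¹)
    obtain ⟨t, ht1, ht2⟩ := mem_closure_iff.1 hg _ hUopen (by simp [hV1 (n + 1)])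
    have hg' : g ∈ V (n + 1) * V (n + 1) := by
      refine ⟨t, ht2, (g⁻¹ * t)⁻¹, ?_, by group⟩
      rw [← hVsymm (n + 1)]
      exact Set.inv_mem_inv.2 ht1
    exact (hVmul n hg').1
  -- cluster point in closed sets helper
  have hcluMem : ∀ (C : Set G), IsClosed C → ∀ (c : ℕ → G) (p : G),
      (∀ n, c n ∈ C) → MapClusterPt p atTop c → p ∈ C := by
    intro C hC c p hc hp
    have hle : map c atTop ≤ 𝓟 C :=
      le_principal_iff.2 (mem_map.2 (Eventually.of_forall hc))
    have := hp.clusterPt.mono hle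
    simpa [hC.closure_eq] using mem_closure_iff_clusterPt.2 this
  -- the cluster property of the sequence V
  have hclusP : ∀ w : ℕ → G, (∀ n, w n ∈ V n) →
      ∃ p : G, (∀ n, p ∈ V n) ∧ MapClusterPt p atTop w := by
    intro w hw
    obtain ⟨p, hp⟩ := hAclus w (fun n => hVA n (hw n))
    refine ⟨p, fun n => ?_, hp⟩
    have hle : map w atTop ≤ 𝓟 (V (n + 1)) := by
      refine le_principal_iff.2 (mem_map.2 (mem_of_superset (mem_atTop (n + 1)) ?_))
      intro k hk
      exact hVmono hk (hw k)
    exact hVclos n (mem_closure_iff_clusterPt.2 (hp.clusterPt.mono hle))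
  -- the "countably compact kernel"
  set PP : Set G := {g : G | ∀ n, g ∈ V n} with hPPdef
  have hPPV : ∀ n, PP ⊆ V n := fun n g hg => hg n
  have hPPmul : ∀ {a b : G}, a ∈ PP → b ∈ PP → a * b ∈ PP := by
    intro a b ha hb n
    exact (hVmul n (Set.mul_mem_mul (ha (n + 1)) (hb (n + 1)))).1
  have hPPinv : ∀ {a : G}, a ∈ PP → a⁻¹ ∈ PP := by
    intro a ha n
    rw [← hVsymm n]
    exact Set.inv_mem_inv.2 (ha n)
  -- the quotient map and its synonym-valued version
  set π : G → G ⧸ H := QuotientGroup.mk with hπdef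
  have hπcont : Continuous π := QuotientGroup.continuous_mk
  have hπopen : IsOpenMap π := QuotientGroup.isOpenMap_coe
  have hπsurj : Function.Surjective π := QuotientGroup.mk_surjective
  set πu : G → CosetU H := fun g => toU (π g) with hπudef
  have hπusurj : Function.Surjective πu := by
    intro b
    obtain ⟨g, hg⟩ := QuotientGroup.mk_surjective (show G ⧸ H from b)
    exact ⟨g, hg⟩
  -- the entourages
  set E : ℕ → Set (CosetU H × CosetU H) := fun n =>
    {q | ∃ x y h, h ∈ H ∧ q.1 = πu x ∧ q.2 = πu y ∧ x * h * y⁻¹ ∈ V n} with hEdef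
  have memE : ∀ (n : ℕ) (x y : G),
      ((πu x, πu y) ∈ E n) ↔ ∃ h ∈ H, x * h * y⁻¹ ∈ V n := by
    intro n x y
    constructor
    · rintro ⟨x', y', h', hh', hx, hy, hv⟩
      have hk : x⁻¹ * x' ∈ H := QuotientGroup.eq.1 hx
      have hl : y⁻¹ * y' ∈ H := QuotientGroup.eq.1 hy
      refine ⟨(x⁻¹ * x') * h' * (y⁻¹ * y')⁻¹,
        H.mul_mem (H.mul_mem hk hh') (H.inv_mem hl), ?_⟩
      have : x * ((x⁻¹ * x') * h' * (y⁻¹ * y')⁻¹) * y⁻¹ = x' * h' * y'⁻¹ := by group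
      rw [this]
      exact hv
    · rintro ⟨h, hh, hv⟩
      exact ⟨x, y, h, hh, rfl, rfl, hv⟩
  have hErefl : ∀ (n : ℕ) (a : CosetU H), (a, a) ∈ E n := by
    intro n a
    obtain ⟨x, rfl⟩ := hπusurj a
    refine (memE n x x).2 ⟨1, H.one_mem, ?_⟩
    have : x * 1 * x⁻¹ = 1 := by group
    rw [this]
    exact hV1 n
  have hEsymm : ∀ (n : ℕ) (a b : CosetU H), (a, b) ∈ E n → (b, a) ∈ E n := by
    intro n a b hab
    obtain ⟨x, rfl⟩ := hπusurj a
    obtain ⟨y, rfl⟩ := hπusurj b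
    obtain ⟨h, hh, hv⟩ := (memE n x y).1 hab
    refine (memE n y x).2 ⟨h⁻¹, H.inv_mem hh, ?_⟩
    have : y * h⁻¹ * x⁻¹ = (x * h * y⁻¹)⁻¹ := by group
    rw [this, ← hVsymm n]
    exact Set.inv_mem_inv.2 hv
  have hEcomp : ∀ n : ℕ, E (n + 1) ○ E (n + 1) ⊆ E n := by
    rintro n ⟨a, c⟩ ⟨b, hab, hbc⟩
    obtain ⟨x, rfl⟩ := hπusurj a
    obtain ⟨y, rfl⟩ := hπusurj b
    obtain ⟨z, rfl⟩ := hπusurj c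
    obtain ⟨h₁, hh₁, hv₁⟩ := (memE (n + 1) x y).1 hab
    obtain ⟨h₂, hh₂, hv₂⟩ := (memE (n + 1) y z).1 hbc
    refine (memE n x z).2 ⟨h₁ * h₂, H.mul_mem hh₁ hh₂, ?_⟩
    have : x * (h₁ * h₂) * z⁻¹ = (x * h₁ * y⁻¹) * (y * h₂ * z⁻¹) := by group
    rw [this]
    exact (hVmul n (Set.mul_mem_mul hv₁ hv₂)).1
  have hEdec : ∀ {m n : ℕ}, m ≤ n → E n ⊆ E m := by
    intro m n hmn q hq
    obtain ⟨x, y, h, hh, h1, h2, hv⟩ := hq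
    exact ⟨x, y, h, hh, h1, h2, hVmono hmn hv⟩
  have hdir : Directed (· ≥ ·) E := fun m n =>
    ⟨max m n, hEdec (le_max_left _ _), hEdec (le_max_right _ _)⟩
  have hBpre : (⨅ n, 𝓟 (E n)).HasBasis (fun _ : ℕ => True) E :=
    hasBasis_iInf_principal hdir
  -- the uniform structure on the synonym
  letI uSp : UniformSpace (CosetU H) := UniformSpace.ofCore <|
    UniformSpace.Core.mk' (⨅ n, 𝓟 (E n))
      (by
        intro r hr a
        obtain ⟨n, -, hn⟩ := hBpre.mem_iff.1 hr
        exact hn (hErefl n a))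
      (by
        intro r hr
        obtain ⟨n, -, hn⟩ := hBpre.mem_iff.1 hr
        refine mem_of_superset (hBpre.mem_of_mem (i := n) trivial) ?_
        intro q hq
        exact hn (hEsymm n q.1 q.2 hq))
      (by
        intro r hr
        obtain ⟨n, -, hn⟩ := hBpre.mem_iff.1 hr
        exact ⟨E (n + 1), hBpre.mem_of_mem trivial, (hEcomp n).trans hn⟩)
  have hB : (𝓤 (CosetU H)).HasBasis (fun _ : ℕ => True) E := hBpre
  haveI hcg : (𝓤 (CosetU H)).IsCountablyGenerated := hB.isCountablyGenerated
  -- the metrizable target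
  haveI : (𝓤 (SeparationQuotient (CosetU H))).IsCountablyGenerated := by
    rw [SeparationQuotient.uniformity_eq]
    exact Filter.map.isCountablyGenerated _ _
  have hmetr : TopologicalSpace.MetrizableSpace (SeparationQuotient (CosetU H)) :=
    UniformSpace.metrizableSpace
  set f : G ⧸ H → SeparationQuotient (CosetU H) :=
    fun a => SeparationQuotient.mk (toU a) with hfdef
  -- characterization of inseparability
  have hinsep : ∀ a b : G, Inseparable (πu a) (πu b) ↔ ∃ h ∈ H, a * h * b⁻¹ ∈ PP := by
    intro a b
    rw [hB.inseparable_iff_uniformity]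
    constructor
    · intro hall
      have hsel : ∀ n, ∃ h ∈ H, a * h * b⁻¹ ∈ V n := fun n => (memE n a b).1 (hall n trivial)
      choose h hh hv using hsel
      obtain ⟨r, hrP, hrcl⟩ := hclusP (fun n => a * h n * b⁻¹) hv
      have hccl : MapClusterPt (a⁻¹ * r * b) atTop (fun n => h n) := by
        have h3 := MapClusterPt.continuousAt_comp (f := fun t : G => a⁻¹ * t * b)
          ((continuous_mul_right b).comp (continuous_mul_left a⁻¹)).continuousAt hrcl
        have heq : (fun t : G => a⁻¹ * t * b) ∘ (fun n => a * h n * b⁻¹) = fun n => h n := by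
          funext n
          show a⁻¹ * (a * h n * b⁻¹) * b = h n
          group
        rwa [heq] at h3
      have hrH : a⁻¹ * r * b ∈ H := hcluMem (H : Set G) hH _ _ (fun n => hh n) hccl
      refine ⟨a⁻¹ * r * b, hrH, ?_⟩
      have : a * (a⁻¹ * r * b) * b⁻¹ = r := by group
      rw [this]
      exact hrP
    · rintro ⟨h, hh, hp⟩ n -
      exact (memE n a b).2 ⟨h, hh, hPPV n hp⟩
  -- membership in the saturation of a set
  have hmemT : ∀ (S : Set G) (y : G),
      πu y ∈ SeparationQuotient.mk ⁻¹' (SeparationQuotient.mk '' (πu '' S)) ↔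
        ∃ x ∈ S, ∃ h ∈ H, x * h * y⁻¹ ∈ PP := by
    intro S y
    simp only [Set.mem_preimage, Set.mem_image]
    constructor
    · rintro ⟨b, ⟨xg, hxg, rfl⟩, hmk⟩
      exact ⟨xg, hxg, (hinsep xg y).1 (SeparationQuotient.mk_eq_mk.1 hmk)⟩
    · rintro ⟨xg, hxg, h, hh, hp⟩
      exact ⟨πu xg, ⟨xg, hxg, rfl⟩, SeparationQuotient.mk_eq_mk.2 ((hinsep xg y).2 ⟨h, hh, hp⟩)⟩
  -- openness of saturations of open invariant sets
  have hTopen : ∀ S : Set G, IsOpen S → (∀ g h, g ∈ S → h ∈ H → g * h ∈ S) →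
      IsOpen (SeparationQuotient.mk ⁻¹' (SeparationQuotient.mk '' (πu '' S))) := by
    intro S hSo hSinv
    rw [isOpen_iff_mem_nhds]
    intro b hb
    obtain ⟨y, rfl⟩ := hπusurj b
    obtain ⟨x, hx, h, hh, hp⟩ := (hmemT S y).1 hb
    rw [UniformSpace.mem_nhds_iff]
    by_contra hcon
    push_neg at hcon
    have hsel : ∀ n, ∃ zc : G, (∃ h' ∈ H, y * h' * zc⁻¹ ∈ V n) ∧
        πu zc ∉ SeparationQuotient.mk ⁻¹' (SeparationQuotient.mk '' (πu '' S)) := by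
      intro n
      have h1 := hcon (E n) (hB.mem_of_mem trivial)
      rcases Set.not_subset.1 h1 with ⟨b', hb1, hb2⟩
      obtain ⟨zc, rfl⟩ := hπusurj b'
      exact ⟨zc, (memE n y zc).1 hb1, hb2⟩
    choose z hzV hzT using hsel
    choose h' hh' hv using hzV
    set w : ℕ → G := fun n => (y * h' n * (z n)⁻¹)⁻¹ with hwdef
    have hwV : ∀ n, w n ∈ V n := by
      intro n
      simp only [hwdef]
      rw [← hVsymm n]
      exact Set.inv_mem_inv.2 (hv n)
    obtain ⟨r, hrP, hrcl⟩ := hclusP w hwV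
    have hc : MapClusterPt (r * y) atTop (fun n => w n * y) :=
      MapClusterPt.continuousAt_comp (continuous_mul_right y).continuousAt hrcl
    have hWo : IsOpen ((fun g : G => (x * h * y⁻¹) * r⁻¹ * g) ⁻¹' S) :=
      hSo.preimage (continuous_mul_left _)
    have hmemW : r * y ∈ (fun g : G => (x * h * y⁻¹) * r⁻¹ * g) ⁻¹' S := by
      have heq : (x * h * y⁻¹) * r⁻¹ * (r * y) = x * h := by group
      show (x * h * y⁻¹) * r⁻¹ * (r * y) ∈ S
      rw [heq]
      exact hSinv x h hx hh
    obtain ⟨n, hn⟩ := ((mapClusterPt_iff_frequently.1 hc) _ (hWo.mem_nhds hmemW)).exists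
    have hn' : (x * h * y⁻¹) * r⁻¹ * (w n * y) ∈ S := hn
    refine hzT n ((hmemT S (z n)).2
      ⟨(x * h * y⁻¹) * r⁻¹ * (w n * y) * h' n, hSinv _ _ hn' (hh' n), 1, H.one_mem, ?_⟩)
    have heq2 : (x * h * y⁻¹) * r⁻¹ * (w n * y) * h' n * 1 * (z n)⁻¹ = (x * h * y⁻¹) * r⁻¹ := by
      simp only [hwdef]
      group
    rw [heq2]
    exact hPPmul hp (hPPinv hrP)
  -- closedness of saturations of closed invariant sets
  have hTclosed : ∀ S : Set G, IsClosed S → (∀ g h, g ∈ S → h ∈ H → g * h ∈ S) →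
      IsClosed (SeparationQuotient.mk ⁻¹' (SeparationQuotient.mk '' (πu '' S))) := by
    intro S hSc hSinv
    rw [← isOpen_compl_iff, isOpen_iff_mem_nhds]
    intro b hb
    obtain ⟨y, rfl⟩ := hπusurj b
    rw [UniformSpace.mem_nhds_iff]
    by_contra hcon
    push_neg at hcon
    have hsel : ∀ n, ∃ zc : G, (∃ h' ∈ H, y * h' * zc⁻¹ ∈ V (n + 1)) ∧
        πu zc ∈ SeparationQuotient.mk ⁻¹' (SeparationQuotient.mk '' (πu '' S)) := by
      intro n
      have h1 := hcon (E (n + 1)) (hB.mem_of_mem trivial)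
      rcases Set.not_subset.1 h1 with ⟨b', hb1, hb2⟩
      obtain ⟨zc, rfl⟩ := hπusurj b'
      exact ⟨zc, (memE (n + 1) y zc).1 hb1, Set.not_notMem.1 hb2⟩
    choose z hzV hzT using hsel
    choose h' hh' hv using hzV
    have hzT' : ∀ n, ∃ x ∈ S, ∃ k ∈ H, x * k * (z n)⁻¹ ∈ PP :=
      fun n => (hmemT S (z n)).1 (hzT n)
    choose xx hxx k hk hpk using hzT'
    set w : ℕ → G := fun n => (xx n * k n * (z n)⁻¹) * (y * h' n * (z n)⁻¹)⁻¹ with hwdef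
    have hwV : ∀ n, w n ∈ V n := by
      intro n
      refine (hVmul n (Set.mul_mem_mul (hPPV (n + 1) (hpk n)) ?_)).1
      rw [← hVsymm (n + 1)]
      exact Set.inv_mem_inv.2 (hv n)
    obtain ⟨r, hrP, hrcl⟩ := hclusP w hwV
    have hc : MapClusterPt (r * y) atTop (fun n => w n * y) :=
      MapClusterPt.continuousAt_comp (continuous_mul_right y).continuousAt hrcl
    have hcS : ∀ n, w n * y ∈ S := by
      intro n
      have heq : w n * y = xx n * k n * (h' n)⁻¹ := by
        simp only [hwdef]
        group
      rw [heq]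
      exact hSinv _ _ (hSinv _ _ (hxx n) (hk n)) (H.inv_mem (hh' n))
    have hryS : r * y ∈ S := hcluMem S hSc _ _ hcS hc
    refine hb ((hmemT S y).2 ⟨r * y, hryS, 1, H.one_mem, ?_⟩)
    have : (r * y) * 1 * y⁻¹ = r := by group
    rw [this]
    exact hrP
  -- continuity of the identity into the synonym
  have htoU : Continuous (fun a : G ⧸ H => toU a) := by
    rw [continuous_def]
    intro s hs
    have hpre : IsOpen (πu ⁻¹' s) := by
      rw [isOpen_iff_mem_nhds]
      intro g hg
      rcases UniformSpace.mem_nhds_iff.1 (hs.mem_nhds hg) with ⟨W, hW, hball⟩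
      rcases hB.mem_iff.1 hW with ⟨n, -, hEW⟩
      have hBo : IsOpen ((fun t : G => t * g⁻¹) ⁻¹' V n) :=
        (hVo n).preimage (continuous_mul_right g⁻¹)
      refine Filter.mem_of_superset (hBo.mem_nhds ?_) ?_
      · show g * g⁻¹ ∈ V n
        rw [mul_inv_cancel]
        exact hV1 n
      · intro t ht
        have hmem : (πu g, πu t) ∈ E n := by
          refine (memE n g t).2 ⟨1, H.one_mem, ?_⟩
          have : g * 1 * t⁻¹ = (t * g⁻¹)⁻¹ := by group
          rw [this, ← hVsymm n]
          exact Set.inv_mem_inv.2 ht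
        exact hball (hEW hmem)
    have himg : (fun a : G ⧸ H => toU a) ⁻¹' s = π '' (πu ⁻¹' s) := by
      rw [show πu ⁻¹' s = π ⁻¹' ((fun a : G ⧸ H => toU a) ⁻¹' s) from rfl,
        Set.image_preimage_eq _ hπsurj]
    rw [himg]
    exact hπopen _ hpre
  -- right H-invariance of preimages under π
  have hinv : ∀ (O : Set (G ⧸ H)) (g h : G), g ∈ π ⁻¹' O → h ∈ H → g * h ∈ π ⁻¹' O := by
    intro O g h hg hh
    show π (g * h) ∈ O
    have : π (g * h) = π g := QuotientGroup.mk_mul_of_mem g hh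
    rw [this]
    exact hg
  -- the image identity
  have himage : ∀ O : Set (G ⧸ H),
      f '' O = SeparationQuotient.mk '' (πu '' (π ⁻¹' O)) := by
    intro O
    calc f '' O = SeparationQuotient.mk '' ((fun a : G ⧸ H => toU a) '' O) :=
          (Set.image_image _ _ _).symm
      _ = SeparationQuotient.mk '' ((fun a : G ⧸ H => toU a) '' (π '' (π ⁻¹' O))) := by
          rw [Set.image_preimage_eq O hπsurj]
      _ = SeparationQuotient.mk '' (πu '' (π ⁻¹' O)) := by
          simp only [Set.image_image, hπudef]
  -- the three main properties of f
  have hcont : Continuous f := SeparationQuotient.continuous_mk.comp htoU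
  have hOpenMap : IsOpenMap f := by
    intro O hO
    rw [himage O, ← SeparationQuotient.isQuotientMap_mk.isOpen_preimage]
    exact hTopen _ (hO.preimage hπcont) (hinv O)
  have hClosedMap : IsClosedMap f := by
    intro C hC
    rw [himage C, ← SeparationQuotient.isQuotientMap_mk.isClosed_preimage]
    exact hTclosed _ (hC.preimage hπcont) (hinv C)
  refine ⟨SeparationQuotient (CosetU H), inferInstance, hmetr, f, hcont, hOpenMap, hClosedMap, ?_⟩
  -- countably compact fibers
  intro y u hu
  obtain ⟨b, rfl⟩ := SeparationQuotient.surjective_mk y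
  obtain ⟨x, rfl⟩ := hπusurj b
  have hrep : ∀ n, ∃ zc : G, π zc = u n := fun n => hπsurj (u n)
  choose z hz using hrep
  have hins : ∀ n, ∃ h ∈ H, z n * h * x⁻¹ ∈ PP := by
    intro n
    have h1 : f (u n) = SeparationQuotient.mk (πu x) := hu n
    have h2 : Inseparable (πu (z n)) (πu x) := by
      apply SeparationQuotient.mk_eq_mk.1
      have hzn : πu (z n) = toU (u n) := by
        rw [hπudef]
        show toU (π (z n)) = toU (u n)
        rw [hz n]
      rw [hzn]
      exact h1
    exact (hinsep (z n) x).1 h2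
  choose h hh hp using hins
  have hwV : ∀ n, z n * h n * x⁻¹ ∈ V n := fun n => hp n n
  obtain ⟨r, hrP, hrcl⟩ := hclusP (fun n => z n * h n * x⁻¹) hwV
  have hφ : Continuous (fun g : G => π (g * x)) := hπcont.comp (continuous_mul_right x)
  have hucl : MapClusterPt (π (r * x)) atTop u := by
    have h3 := MapClusterPt.continuousAt_comp (f := fun g : G => π (g * x))
      hφ.continuousAt hrcl
    have heq : (fun g : G => π (g * x)) ∘ (fun n => z n * h n * x⁻¹) = u := by
      funext n
      show π (z n * h n * x⁻¹ * x) = u n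
      have he : z n * h n * x⁻¹ * x = z n * h n := by group
      rw [he, hπdef] at *
      rw [QuotientGroup.mk_mul_of_mem (z n) (hh n)]
      exact hz n
    rwa [heq] at h3
  refine ⟨π (r * x), ?_, hucl⟩
  show f (π (r * x)) = SeparationQuotient.mk (πu x)
  apply SeparationQuotient.mk_eq_mk.2
  refine (hinsep (r * x) x).2 ⟨1, H.one_mem, ?_⟩
  have : (r * x) * 1 * x⁻¹ = r := by group
  rw [this]
  exact hrP
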